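/- With the notation of the previous statement (V* open in Lip(X), γ(φ) ≤ C* on V*, K_φ := ∩_{m≥0} T^m K̂_φ), the set-valued map φ ↦ K_φ on V* is upper semi-continuous: if φ_n → φ in Lip(X) with all φ_n, φ ∈ V*, and x_n ∈ K_{φ_n} with x_n → x, then x ∈ K_φ. Equivalently, for every φ ∈ V* and every open V ⊇ K_φ there is an open neighborhood W of φ in V* such that K_ψ ⊆ V for all ψ ∈ W. -/

import Mathlib

open MeasureTheory Set Metric

section

variable {X : Type*} [MetricSpace X] [MeasurableSpace X]

noncomputable def beta (T : X → X) (φ : X → ℝ) : ℝ :=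
  sSup ((fun μ : Measure X => ∫ x, φ x ∂μ) ''
    {μ : Measure X | IsProbabilityMeasure μ ∧ μ.map T = μ})

/-- the Lipschitz norm `‖φ‖_∞ + lip(φ)` -/
noncomputable def lipNorm (φ : X → ℝ) : ℝ :=
  (⨆ x, |φ x|) + sSup {r : ℝ | ∃ x y : X, x ≠ y ∧ r = |φ x - φ y| / dist x y}

noncomputable def lipDist (φ ψ : X → ℝ) : ℝ := lipNorm (fun x => φ x - ψ x)

/-- `K̂_φ` -/
noncomputable def Khat (T : X → X) (φ : X → ℝ) (Cs : ℝ) : Set X :=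
  {x | ∀ k : ℕ, 1 ≤ k → ∀ l : ℕ,
    |∑ j ∈ Finset.range k, φ (T^[j] (T^[l] x)) - k * beta T φ| ≤ Cs}

/-- `K_φ = ⋂_{m≥0} T^m K̂_φ` -/
noncomputable def Kset (T : X → X) (φ : X → ℝ) (Cs : ℝ) : Set X :=
  ⋂ m : ℕ, T^[m] '' Khat T φ Cs

end

section aux
variable {X : Type*} [MetricSpace X] [CompactSpace X]

lemma abs_le_lipNorm (f : X → ℝ) (hf : Continuous f) (x : X) : |f x| ≤ lipNorm f := by
  have h1 : |f x| ≤ ⨆ y, |f y| := le_ciSup (isCompact_range hf.abs).bddAbove x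
  have h2 : (0:ℝ) ≤ sSup {r : ℝ | ∃ x y : X, x ≠ y ∧ r = |f x - f y| / dist x y} := by
    apply Real.sSup_nonneg
    rintro r ⟨a, b, hab, rfl⟩
    positivity
  unfold lipNorm
  linarith

variable [MeasurableSpace X] [BorelSpace X]

lemma beta_le (T : X → X) (f g : X → ℝ) (hfc : Continuous f) (hgc : Continuous g)
    (ε : ℝ) (hε : 0 ≤ ε) (h : ∀ x, |f x - g x| ≤ ε) :
    beta T f ≤ beta T g + ε := by
  rcases ({μ : Measure X | IsProbabilityMeasure μ ∧ μ.map T = μ}).eq_empty_or_nonempty with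
    hM | ⟨μ₀, hμ₀⟩
  · simp [beta, hM, Real.sSup_empty, hε]
  · have hbdd : BddAbove ((fun μ : Measure X => ∫ x, g x ∂μ) ''
        {μ : Measure X | IsProbabilityMeasure μ ∧ μ.map T = μ}) := by
      refine ⟨⨆ y, |g y|, ?_⟩
      rintro a ⟨μ, hμ, rfl⟩
      haveI := hμ.1
      have hint : Integrable g μ := hgc.integrable_of_hasCompactSupport
        (HasCompactSupport.of_compactSpace g)
      calc ∫ x, g x ∂μ ≤ ∫ _x, (⨆ y, |g y|) ∂μ := by
            apply integral_mono hint (integrable_const _)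
            intro x
            exact (le_abs_self _).trans (le_ciSup (isCompact_range hgc.abs).bddAbove x)
        _ = ⨆ y, |g y| := by simp
    unfold beta
    apply csSup_le (Set.Nonempty.image _ ⟨μ₀, hμ₀⟩)
    rintro a ⟨μ, hμ, rfl⟩
    haveI := hμ.1
    have hintf : Integrable f μ := hfc.integrable_of_hasCompactSupport
      (HasCompactSupport.of_compactSpace f)
    have hintg : Integrable g μ := hgc.integrable_of_hasCompactSupport
      (HasCompactSupport.of_compactSpace g)
    have h1 : ∫ x, f x ∂μ ≤ (∫ x, g x ∂μ) + ε := by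
      have := integral_mono hintf (hintg.add (integrable_const ε))
        (fun x => by have := (abs_le.mp (h x)).2; simp only [Pi.add_apply]; linarith)
      simpa [integral_add hintg (integrable_const ε)] using this
    have h2 : ∫ x, g x ∂μ ≤ sSup ((fun μ : Measure X => ∫ x, g x ∂μ) ''
        {μ : Measure X | IsProbabilityMeasure μ ∧ μ.map T = μ}) :=
      le_csSup hbdd ⟨μ, hμ, rfl⟩
    linarith

lemma beta_abs_sub_le (T : X → X) (f g : X → ℝ) (hfc : Continuous f) (hgc : Continuous g)
    (ε : ℝ) (hε : 0 ≤ ε) (h : ∀ x, |f x - g x| ≤ ε) :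
    |beta T f - beta T g| ≤ ε := by
  rw [abs_sub_le_iff]
  constructor
  · linarith [beta_le T f g hfc hgc ε hε h]
  · refine ?_
    have := beta_le T g f hgc hfc ε hε (fun x => by rw [abs_sub_comm]; exact h x)
    linarith

end aux

/-- upper semi-continuity of `φ ↦ K_φ`: if `φₙ → φ` in `Lip(X)`
(all lying in `V*` where `γ ≤ C*`), `xₙ ∈ K_{φₙ}` and `xₙ → x`, then `x ∈ K_φ`. -/
theorem stmt11 {X : Type*} [MetricSpace X] [CompactSpace X]
    [MeasurableSpace X] [BorelSpace X]
    (T : X → X) (hT : Continuous T)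
    (Cs : ℝ) (hCs : 0 < Cs)
    (Vs : Set (X → ℝ))
    (hVlip : ∀ φ ∈ Vs, ∃ K : NNReal, LipschitzWith K φ)
    (hVγ : ∀ φ ∈ Vs, ∀ n : ℕ, 1 ≤ n → ∀ x : X,
      ∑ k ∈ Finset.range n, φ (T^[k] x) - n * beta T φ ≤ Cs)
    (φseq : ℕ → X → ℝ) (φ : X → ℝ)
    (hseq : ∀ n, φseq n ∈ Vs) (hφ : φ ∈ Vs)
    (hconv : Filter.Tendsto (fun n => lipDist (φseq n) φ) Filter.atTop (nhds 0))
    (xseq : ℕ → X) (x : X)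
    (hx : ∀ n, xseq n ∈ Kset T (φseq n) Cs)
    (hxconv : Filter.Tendsto xseq Filter.atTop (nhds x)) :
    x ∈ Kset T φ Cs := by
  haveI : Nonempty X := ⟨x⟩
  set ε : ℕ → ℝ := fun n => lipDist (φseq n) φ with hεdef
  have hφc : Continuous φ := (hVlip φ hφ).choose_spec.continuous
  have hφnc : ∀ n, Continuous (φseq n) := fun n => (hVlip _ (hseq n)).choose_spec.continuous
  have hA : ∀ n y, |φseq n y - φ y| ≤ ε n := fun n y =>
    abs_le_lipNorm _ ((hφnc n).sub hφc) y
  have hβ : ∀ n, |beta T (φseq n) - beta T φ| ≤ ε n := fun n =>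
    beta_abs_sub_le T _ _ (hφnc n) hφc (ε n) ((abs_nonneg _).trans (hA n x)) (hA n)
  have key : ∀ (σ : ℕ → ℕ), StrictMono σ → ∀ (w : ℕ → X) (p : X),
      Filter.Tendsto w Filter.atTop (nhds p) →
      Filter.Tendsto (fun j => φseq (σ j) (w j)) Filter.atTop (nhds (φ p)) := by
    intro σ hσ w p hw
    rw [tendsto_iff_dist_tendsto_zero]
    have hbound : ∀ j, dist (φseq (σ j) (w j)) (φ p) ≤ ε (σ j) + dist (φ (w j)) (φ p) := by
      intro j
      refine (dist_triangle _ (φ (w j)) _).trans ?_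
      have : dist (φseq (σ j) (w j)) (φ (w j)) ≤ ε (σ j) := by
        rw [Real.dist_eq]; exact hA (σ j) (w j)
      linarith
    have hlim : Filter.Tendsto (fun j => ε (σ j) + dist (φ (w j)) (φ p))
        Filter.atTop (nhds 0) := by
      have h1 : Filter.Tendsto (fun j => ε (σ j)) Filter.atTop (nhds 0) :=
        hconv.comp hσ.tendsto_atTop
      have h2 : Filter.Tendsto (fun j => dist (φ (w j)) (φ p)) Filter.atTop (nhds 0) :=
        tendsto_iff_dist_tendsto_zero.mp ((hφc.tendsto p).comp hw)
      simpa using h1.add h2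
    exact squeeze_zero (fun j => dist_nonneg) hbound hlim
  rw [Kset, Set.mem_iInter]
  intro m
  have hmem : ∀ n, ∃ y, y ∈ Khat T (φseq n) Cs ∧ T^[m] y = xseq n := by
    intro n
    have := Set.mem_iInter.mp (hx n) m
    exact this
  choose y hy hTy using hmem
  obtain ⟨z, -, σ, hσ, hyz⟩ := isCompact_univ.tendsto_subseq (fun n => Set.mem_univ (y n))
  refine ⟨z, ?_, ?_⟩
  · -- z ∈ Khat T φ Cs
    intro k hk l
    have hwl : Filter.Tendsto (fun j => T^[l] (y (σ j))) Filter.atTop (nhds (T^[l] z)) :=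
      ((hT.iterate l).tendsto z).comp hyz
    have hsum : Filter.Tendsto
        (fun j => ∑ i ∈ Finset.range k, φseq (σ j) (T^[i] (T^[l] (y (σ j)))))
        Filter.atTop (nhds (∑ i ∈ Finset.range k, φ (T^[i] (T^[l] z)))) := by
      refine tendsto_finset_sum _ (fun i _ => ?_)
      exact key σ hσ _ _ (((hT.iterate i).tendsto _).comp hwl)
    have hβ' : Filter.Tendsto (fun j => beta T (φseq (σ j))) Filter.atTop
        (nhds (beta T φ)) := by
      rw [tendsto_iff_dist_tendsto_zero]
      refine squeeze_zero (fun j => dist_nonneg) (fun j => ?_)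
        (hconv.comp hσ.tendsto_atTop)
      rw [Real.dist_eq]; exact hβ (σ j)
    have hfull : Filter.Tendsto
        (fun j => |∑ i ∈ Finset.range k, φseq (σ j) (T^[i] (T^[l] (y (σ j)))) -
          k * beta T (φseq (σ j))|)
        Filter.atTop (nhds (|∑ i ∈ Finset.range k, φ (T^[i] (T^[l] z)) - k * beta T φ|)) :=
      (hsum.sub (hβ'.const_mul (k : ℝ))).abs
    exact le_of_tendsto hfull (Filter.Eventually.of_forall fun j => hy (σ j) k hk l)
  · -- T^[m] z = x
    have h1 : Filter.Tendsto (fun j => T^[m] (y (σ j))) Filter.atTop (nhds (T^[m] z)) :=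
      ((hT.iterate m).tendsto z).comp hyz
    have h2 : Filter.Tendsto (fun j => T^[m] (y (σ j))) Filter.atTop (nhds x) := by
      have := hxconv.comp hσ.tendsto_atTop
      simpa [fun j => hTy (σ j), Function.comp_def] using this
    exact tendsto_nhds_unique h1 h2
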